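/- arXiv:1810.10883 — 2 statements merged into one kernel-verified Lean document; each statement's English description precedes it below -/
import Mathlib

section
/- For any λ > 1 and any integer n > 2^{λ−1}/(2^{λ−1} − 1), there is no probability measure Λ on [0,1] such that C(n,s)^{-1} π_n(s) = ∫_0^1 α^s (1−α)^{n−s} dΛ(α) for all s = 0,...,n, where π_n is the normalized polynomial-tail prior with π_n(0) ∝ 1 and π_n(s) ∝ s^{−λ} for s = 1,...,n. -/
open Finset MeasureTheory

/-- For λ > 1 and integer n > 2^{λ−1}/(2^{λ−1}−1), the normalized
polynomial-tail prior π_n(0) ∝ 1, π_n(s) ∝ s^{−λ} on {0,...,n} admits no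
spike-and-slab representation: there is no probability measure Λ on [0,1] with
C(n,s)⁻¹ π_n(s) = ∫ α^s (1−α)^{n−s} dΛ(α) for all s = 0,...,n. -/
theorem stmt_10 (lam : ℝ) (hlam : 1 < lam) (n : ℕ)
    (hn : (2 : ℝ) ^ (lam - 1) / ((2 : ℝ) ^ (lam - 1) - 1) < (n : ℝ))
    (w : ℕ → ℝ) (hw : ∀ s : ℕ, w s = if s = 0 then 1 else (s : ℝ) ^ (-lam))
    (π : ℕ → ℝ) (hπ : ∀ s, π s = w s / ∑ t ∈ range (n + 1), w t) :
    ¬ ∃ Λ : Measure ℝ, IsProbabilityMeasure Λ ∧ Λ (Set.Icc (0 : ℝ) 1)ᶜ = 0 ∧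
        ∀ s ≤ n, (n.choose s : ℝ)⁻¹ * π s
          = ∫ α in Set.Icc (0 : ℝ) 1, α ^ s * (1 - α) ^ (n - s) ∂Λ := by
  rintro ⟨Λ, hΛ, hΛc, heq⟩
  -- a := 2^(lam-1) > 1
  have h2 : (1:ℝ) < 2 ^ (lam - 1) := by
    rw [show (1:ℝ) = (2:ℝ) ^ (0:ℝ) by simp]
    exact Real.rpow_lt_rpow_left_iff (by norm_num) |>.mpr (by linarith)
  have ha : (0:ℝ) < 2 ^ (lam - 1) - 1 := by linarith
  -- n ≥ 2
  have hn1 : (1:ℝ) < (n:ℝ) := lt_trans ((one_lt_div ha).mpr (by linarith)) hn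
  have hn2 : 2 ≤ n := by
    have : (1:ℕ) < n := by exact_mod_cast hn1
    omega
  -- key: 2^(1-lam) * n < n - 1
  have hinv : (2:ℝ) ^ (1 - lam) = ((2:ℝ) ^ (lam - 1))⁻¹ := by
    rw [show (1 - lam) = -(lam - 1) by ring, Real.rpow_neg (by norm_num)]
  have hlt : (2:ℝ) ^ (1 - lam) * n < (n:ℝ) - 1 := by
    have h1 : (2:ℝ) ^ (lam - 1) < (n:ℝ) * ((2:ℝ) ^ (lam - 1) - 1) :=
      (div_lt_iff₀ ha).mp hn
    rw [hinv]
    have hb : (0:ℝ) < ((2:ℝ) ^ (lam - 1))⁻¹ := by positivity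
    have hab : (2:ℝ) ^ (lam - 1) * ((2:ℝ) ^ (lam - 1))⁻¹ = 1 :=
      mul_inv_cancel₀ (by linarith)
    nlinarith [mul_lt_mul_of_pos_right h1 hb]
  -- Z > 0
  set Z := ∑ t ∈ range (n + 1), w t with hZ
  have hwnn : ∀ t, 0 ≤ w t := by
    intro t
    rw [hw t]
    split
    · norm_num
    · exact Real.rpow_nonneg (Nat.cast_nonneg t) _
  have hZpos : 0 < Z := by
    have h0 : (1:ℝ) ≤ Z := by
      have := Finset.single_le_sum (f := w) (fun t _ => hwnn t)
        (Finset.mem_range.mpr (Nat.succ_pos n))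
      simpa [hw 0] using this
    linarith
  -- moments
  set m : ℕ → ℝ := fun s => ∫ α in Set.Icc (0:ℝ) 1, α ^ s * (1 - α) ^ (n - s) ∂Λ with hm
  have hint : ∀ s, IntegrableOn (fun α : ℝ => α ^ s * (1 - α) ^ (n - s))
      (Set.Icc (0:ℝ) 1) Λ := fun s =>
    (Continuous.integrableOn_Icc (by continuity))
  obtain ⟨k, hk⟩ : ∃ k, n = k + 2 := ⟨n - 2, by omega⟩
  -- Hankel inequality
  have hankel : m 1 ^ 2 ≤ m 0 * m 2 := by
    have hnn : 0 ≤ ∫ α in Set.Icc (0:ℝ) 1,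
        (m 1 * (1 - α) - m 0 * α) ^ 2 * (1 - α) ^ k ∂Λ := by
      refine setIntegral_nonneg measurableSet_Icc (fun α hα => ?_)
      exact mul_nonneg (sq_nonneg _) (pow_nonneg (by linarith [hα.2]) k)
    have hfun : (fun α : ℝ => (m 1 * (1 - α) - m 0 * α) ^ 2 * (1 - α) ^ k)
        = fun α : ℝ => (m 1 ^ 2 * (α ^ 0 * (1 - α) ^ (n - 0))
            - 2 * m 1 * m 0 * (α ^ 1 * (1 - α) ^ (n - 1)))
            + m 0 ^ 2 * (α ^ 2 * (1 - α) ^ (n - 2)) := by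
      funext α
      subst hk
      norm_num [show k + 2 - 1 = k + 1 by omega]
      ring
    rw [hfun] at hnn
    have i0 : Integrable (fun α : ℝ => m 1 ^ 2 * (α ^ 0 * (1 - α) ^ (n - 0)))
        (Λ.restrict (Set.Icc 0 1)) := (hint 0).const_mul _
    have i1 : Integrable (fun α : ℝ => 2 * m 1 * m 0 * (α ^ 1 * (1 - α) ^ (n - 1)))
        (Λ.restrict (Set.Icc 0 1)) := (hint 1).const_mul _
    have i2 : Integrable (fun α : ℝ => m 0 ^ 2 * (α ^ 2 * (1 - α) ^ (n - 2)))
        (Λ.restrict (Set.Icc 0 1)) := (hint 2).const_mul _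
    have i01 : Integrable (fun α : ℝ => m 1 ^ 2 * (α ^ 0 * (1 - α) ^ (n - 0))
        - 2 * m 1 * m 0 * (α ^ 1 * (1 - α) ^ (n - 1)))
        (Λ.restrict (Set.Icc 0 1)) := i0.sub i1
    rw [integral_add i01 i2, integral_sub i0 i1, integral_const_mul,
        integral_const_mul, integral_const_mul] at hnn
    have em0 : (∫ a in Set.Icc (0:ℝ) 1, a ^ 0 * (1 - a) ^ (n - 0) ∂Λ) = m 0 := rfl
    have em1 : (∫ a in Set.Icc (0:ℝ) 1, a ^ 1 * (1 - a) ^ (n - 1) ∂Λ) = m 1 := rfl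
    have em2 : (∫ a in Set.Icc (0:ℝ) 1, a ^ 2 * (1 - a) ^ (n - 2) ∂Λ) = m 2 := rfl
    rw [em0, em1, em2] at hnn
    have h0 : (0:ℝ) < m 0 := by
      have := heq 0 (by omega)
      simp only [Nat.choose_zero_right, Nat.cast_one, inv_one, one_mul] at this
      simp only [hm]
      rw [← this, hπ 0, hw 0]
      simp only [if_pos rfl]
      exact div_pos one_pos hZpos
    nlinarith [hnn]
  -- evaluate moments
  have e0 : m 0 = 1 / Z := by
    have := heq 0 (by omega)
    simp only [Nat.choose_zero_right, Nat.cast_one, inv_one, one_mul] at this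
    simp only [hm]
    rw [← this, hπ 0, hw 0]; simp
  have e1 : m 1 = ((n:ℝ))⁻¹ * (1 / Z) := by
    have := heq 1 (by omega)
    simp only [hm]
    rw [← this, hπ 1, hw 1]
    simp [Real.one_rpow]
  have e2 : m 2 = ((n:ℝ) * ((n:ℝ) - 1) / 2)⁻¹ * ((2:ℝ) ^ (-lam) / Z) := by
    have := heq 2 (by omega)
    simp only [hm]
    rw [← this, hπ 2, hw 2, Nat.cast_choose_two]
    norm_num
  rw [e0, e1, e2] at hankel
  have hp : (2:ℝ) ^ (1 - lam) = 2 * (2:ℝ) ^ (-lam) := by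
    rw [show (1 - lam) = 1 + (-lam) by ring, Real.rpow_add (by norm_num),
      Real.rpow_one]
  rw [hp] at hlt
  have hnpos : (0:ℝ) < n := by linarith
  have hn1' : (0:ℝ) < (n:ℝ) - 1 := by linarith
  have hppos : (0:ℝ) < (2:ℝ) ^ (-lam) := Real.rpow_pos_of_pos (by norm_num) _
  have hne1 : (n:ℝ) ≠ 0 := ne_of_gt hnpos
  have hne2 : Z ≠ 0 := ne_of_gt hZpos
  have hne3 : (n:ℝ) - 1 ≠ 0 := ne_of_gt hn1'
  field_simp at hankel
  have hD1 : (0:ℝ) < ((n:ℝ) * Z) ^ 2 := pow_pos (mul_pos hnpos hZpos) 2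
  have hD2 : (0:ℝ) < Z * ((n:ℝ) * ((n:ℝ) - 1) * Z) :=
    mul_pos hZpos (mul_pos (mul_pos hnpos hn1') hZpos)
  have h3 : 2 * (2:ℝ) ^ (-lam) * n * n < ((n:ℝ) - 1) * n :=
    mul_lt_mul_of_pos_right hlt hnpos
  nlinarith [hankel, h3, mul_pos hZpos hZpos]
end

section
/- Let μ_0 = 1, μ_1 = e^{−1}/n, μ_2 = 2e^{−2^λ}/(n(n−1)) with λ > log₂(2 + ln 2). If n > c/(c−1) where c = e^{2^λ − 2}/2 > 1, then μ_0 μ_2 − μ_1² = 2e^{−2^λ}/(n(n−1)) − e^{−2}/n² < 0; hence the sub-exponential prior π_n(s) ∝ e^{−s^λ} on {0,...,n} admits no spike-and-slab representation. -/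
open Finset MeasureTheory

private lemma aux_cs (A B C : ℝ) (hA : 0 < A)
    (h : ∀ t : ℝ, 0 ≤ t ^ 2 * A - 2 * t * B + C) : B ^ 2 ≤ A * C := by
  have h := h (B / A)
  have e : (B / A) ^ 2 * A - 2 * (B / A) * B + C = C - B ^ 2 / A := by
    field_simp; ring
  rw [e] at h
  rw [← sub_nonneg]
  calc (0:ℝ) ≤ (C - B ^ 2 / A) * A := mul_nonneg h hA.le
    _ = A * C - B ^ 2 := by field_simp

/-- with μ₀ = 1, μ₁ = e^{−1}/n, μ₂ = 2e^{−2^λ}/(n(n−1)) and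
λ > log₂(2 + ln 2), if n > c/(c−1) where c = e^{2^λ−2}/2, then c > 1 and
μ₀μ₂ − μ₁² < 0; hence the sub-exponential prior π_n(s) ∝ e^{−s^λ} on {0,...,n}
admits no spike-and-slab representation. -/
theorem stmt_12 (lam : ℝ) (hlam : Real.logb 2 (2 + Real.log 2) < lam)
    (n : ℕ) (hn2 : 2 ≤ n)
    (hn : Real.exp ((2 : ℝ) ^ lam - 2) / 2 / (Real.exp ((2 : ℝ) ^ lam - 2) / 2 - 1)
      < (n : ℝ))
    (π : ℕ → ℝ)
    (hπ : ∀ s, π s = Real.exp (-(s : ℝ) ^ lam)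
      / ∑ t ∈ range (n + 1), Real.exp (-(t : ℝ) ^ lam)) :
    1 < Real.exp ((2 : ℝ) ^ lam - 2) / 2 ∧
    (1 : ℝ) * (2 * Real.exp (-(2 : ℝ) ^ lam) / ((n : ℝ) * ((n : ℝ) - 1)))
      - (Real.exp (-1) / (n : ℝ)) ^ 2 < 0 ∧
    ¬ ∃ Λ : Measure ℝ, IsProbabilityMeasure Λ ∧ Λ (Set.Icc (0 : ℝ) 1)ᶜ = 0 ∧
        ∀ s ≤ n, (n.choose s : ℝ)⁻¹ * π s
          = ∫ α in Set.Icc (0 : ℝ) 1, α ^ s * (1 - α) ^ (n - s) ∂Λ := by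
  have hlog2 : (0:ℝ) < Real.log 2 := Real.log_pos one_lt_two
  have h2ln2 : (1:ℝ) < 2 + Real.log 2 := by linarith
  have hpow : (2:ℝ) + Real.log 2 < (2:ℝ) ^ lam := by
    calc (2:ℝ) + Real.log 2 = (2:ℝ) ^ Real.logb 2 (2 + Real.log 2) :=
          (Real.rpow_logb two_pos (by norm_num) (by linarith)).symm
      _ < (2:ℝ) ^ lam := (Real.rpow_lt_rpow_left_iff (by norm_num)).mpr hlam
  have hlam0 : 0 < lam := lt_trans (Real.logb_pos one_lt_two h2ln2) hlam
  set c : ℝ := Real.exp ((2:ℝ)^lam - 2) / 2 with hc_def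
  have hc : 1 < c := by
    rw [hc_def, lt_div_iff₀ two_pos]
    calc (1:ℝ) * 2 = Real.exp (Real.log 2) := by rw [Real.exp_log two_pos]; ring
      _ < Real.exp ((2:ℝ)^lam - 2) := Real.exp_lt_exp.mpr (by linarith)
  clear_value c
  set N : ℝ := (n:ℝ) with hN_def
  have hN : (2:ℝ) ≤ N := by rw [hN_def]; exact_mod_cast hn2
  have hkey : N < c * (N - 1) := by
    rw [div_lt_iff₀ (by linarith : (0:ℝ) < c - 1)] at hn
    nlinarith
  have hE : (0:ℝ) < Real.exp (-(2:ℝ)^lam) := Real.exp_pos _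
  clear_value N
  have hexp2 : Real.exp (-1) ^ 2 = Real.exp (-(2:ℝ)^lam) * (2 * c) := by
    rw [hc_def, sq, ← Real.exp_add,
      show 2 * (Real.exp ((2:ℝ)^lam - 2) / 2) = Real.exp ((2:ℝ)^lam - 2) by ring,
      ← Real.exp_add]
    congr 1
    ring
  have hmain : 2 * Real.exp (-(2:ℝ)^lam) / (N * (N - 1)) < Real.exp (-1) ^ 2 / N ^ 2 := by
    rw [div_lt_div_iff₀ (by nlinarith) (by nlinarith)]
    rw [hexp2]
    nlinarith [mul_pos hE (mul_pos (by linarith : (0:ℝ) < N)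
      (by nlinarith : (0:ℝ) < c * (N - 1) - N))]
  refine ⟨hc, by rw [div_pow]; linarith, ?_⟩
  rintro ⟨Λ, hprob, hnull, hrep⟩
  set Z : ℝ := ∑ t ∈ range (n + 1), Real.exp (-(t : ℝ) ^ lam) with hZ_def
  have hZ : 0 < Z := Finset.sum_pos (fun t _ => Real.exp_pos _) ⟨0, by simp⟩
  clear_value Z
  clear hZ_def
  -- values of the moments
  have h0 : (∫ α in Set.Icc (0:ℝ) 1, α ^ 0 * (1 - α) ^ (n - 0) ∂Λ) = 1 / Z := by
    rw [← hrep 0 (by omega), hπ 0]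
    simp [Real.zero_rpow hlam0.ne']
  have h1 : (∫ α in Set.Icc (0:ℝ) 1, α ^ 1 * (1 - α) ^ (n - 1) ∂Λ)
      = Real.exp (-1) / (N * Z) := by
    rw [← hrep 1 (by omega), hπ 1, hN_def]
    have hn0 : ((n:ℝ)) ≠ 0 := by rw [hN_def] at hN; positivity
    simp only [Nat.choose_one_right, Real.one_rpow]
    field_simp
    simp
  have h2 : (∫ α in Set.Icc (0:ℝ) 1, α ^ 2 * (1 - α) ^ (n - 2) ∂Λ)
      = 2 * Real.exp (-(2:ℝ)^lam) / (N * (N - 1) * Z) := by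
    rw [← hrep 2 hn2, hπ 2, Nat.cast_choose_two, hN_def]
    push_cast
    have hNpos : (0:ℝ) < (n:ℝ) := by rw [hN_def] at hN; linarith
    have hN1 : (0:ℝ) < (n:ℝ) - 1 := by rw [hN_def] at hN; linarith
    have hZ' : Z ≠ 0 := ne_of_gt hZ
    have hA : (n:ℝ) * ((n:ℝ) - 1) ≠ 0 := by positivity
    field_simp
  -- integrability
  have hint : ∀ k : ℕ, IntegrableOn (fun α : ℝ => α ^ k * (1 - α) ^ (n - k))
      (Set.Icc 0 1) Λ := fun k =>
    (Continuous.continuousOn (by continuity)).integrableOn_compact isCompact_Icc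
  -- the quadratic form is nonnegative
  have hquad : ∀ t : ℝ, 0 ≤ t ^ 2 * (1 / Z) - 2 * t * (Real.exp (-1) / (N * Z))
      + 2 * Real.exp (-(2:ℝ)^lam) / (N * (N - 1) * Z) := by
    intro t
    rw [← h0, ← h1, ← h2]
    have hA : Integrable (fun α : ℝ => t ^ 2 * (α ^ 0 * (1 - α) ^ (n - 0)))
        (Λ.restrict (Set.Icc 0 1)) := (hint 0).const_mul _
    have hB : Integrable (fun α : ℝ => 2 * t * (α ^ 1 * (1 - α) ^ (n - 1)))
        (Λ.restrict (Set.Icc 0 1)) := (hint 1).const_mul _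
    have hAB : Integrable (fun α : ℝ => t ^ 2 * (α ^ 0 * (1 - α) ^ (n - 0))
        - 2 * t * (α ^ 1 * (1 - α) ^ (n - 1))) (Λ.restrict (Set.Icc 0 1)) := hA.sub hB
    have heq : ∫ α in Set.Icc (0:ℝ) 1,
        (t ^ 2 * (α ^ 0 * (1 - α) ^ (n - 0)) - 2 * t * (α ^ 1 * (1 - α) ^ (n - 1))
          + α ^ 2 * (1 - α) ^ (n - 2)) ∂Λ
        = t ^ 2 * (∫ α in Set.Icc (0:ℝ) 1, α ^ 0 * (1 - α) ^ (n - 0) ∂Λ)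
          - 2 * t * (∫ α in Set.Icc (0:ℝ) 1, α ^ 1 * (1 - α) ^ (n - 1) ∂Λ)
          + ∫ α in Set.Icc (0:ℝ) 1, α ^ 2 * (1 - α) ^ (n - 2) ∂Λ := by
      rw [integral_add hAB (hint 2), integral_sub hA hB,
        integral_const_mul, integral_const_mul]
    rw [← heq]
    apply setIntegral_nonneg measurableSet_Icc
    intro α hα
    obtain ⟨hα0, hα1⟩ := hα
    obtain ⟨m, rfl⟩ : ∃ m, n = m + 2 := ⟨n - 2, by omega⟩
    have e : t ^ 2 * (α ^ 0 * (1 - α) ^ (m + 2 - 0))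
        - 2 * t * (α ^ 1 * (1 - α) ^ (m + 2 - 1)) + α ^ 2 * (1 - α) ^ (m + 2 - 2)
        = (1 - α) ^ m * (t * (1 - α) - α) ^ 2 := by
      simp only [Nat.sub_zero, show m + 2 - 1 = m + 1 by omega, Nat.add_sub_cancel]
      ring
    rw [e]
    exact mul_nonneg (pow_nonneg (by linarith) _) (sq_nonneg _)
  -- Cauchy–Schwarz conclusion
  have hcs : (Real.exp (-1) / (N * Z)) ^ 2
      ≤ 1 / Z * (2 * Real.exp (-(2:ℝ)^lam) / (N * (N - 1) * Z)) :=
    aux_cs _ _ _ (by positivity) hquad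
  have hNpos : (0:ℝ) < N := by linarith
  have hN1 : (0:ℝ) < N - 1 := by linarith
  rw [div_pow, one_div_mul_eq_div, div_div,
    div_le_div_iff₀ (by positivity) (by positivity)] at hcs
  have hcs' : Real.exp (-1) ^ 2 * (N * (N - 1)) ≤ 2 * Real.exp (-(2:ℝ)^lam) * N ^ 2 := by
    have hzz : (0:ℝ) < Z * Z := mul_pos hZ hZ
    refine le_of_mul_le_mul_right ?_ hzz
    calc Real.exp (-1) ^ 2 * (N * (N - 1)) * (Z * Z)
        = Real.exp (-1) ^ 2 * (N * (N - 1) * Z * Z) := by ring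
      _ ≤ 2 * Real.exp (-(2:ℝ)^lam) * (N * Z) ^ 2 := hcs
      _ = 2 * Real.exp (-(2:ℝ)^lam) * N ^ 2 * (Z * Z) := by ring
  have hmain' : 2 * Real.exp (-(2:ℝ)^lam) * N ^ 2 < Real.exp (-1) ^ 2 * (N * (N - 1)) := by
    rw [div_lt_div_iff₀ (by positivity) (by positivity)] at hmain
    linarith
  linarith
end
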